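/- Let S be a nonempty semigroup such that S \ E(S) is finite, and let T be an S-valued sequence of length |S \ E(S)| with Π(T) ∩ E(S) = ∅. Then the subsemigroup ⟨supp(T)⟩ of S generated by supp(T) equals the union of the cyclic subsemigroups ⟨a⟩ over all a ∈ supp(T). In particular, every x ∈ Π(T) can be written as x = a^k for some a ∈ supp(T) and some integer k with 1 ≤ k ≤ v_a(T). -/

import Mathlib

/-- Product, in order, of the nonempty list `a :: l` in a semigroup. -/
def sprod {S : Type*} [Mul S] (a : S) (l : List S) : S := l.foldl (· * ·) a

/-- `pow1 x n = x^(n+1)`: the `(n+1)`-st power of `x` in a semigroup. -/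
def pow1 {S : Type*} [Mul S] (x : S) : ℕ → S := fun n => Nat.rec x (fun _ y => y * x) n

/-- `Π(T)`: the set of products, in order, of nonempty lists which are
permutations of order-preserving sublists of `T`. -/
def PiSet {S : Type*} [Mul S] (T : List S) : Set S :=
  {s | ∃ u : List S, u.Sublist T ∧ ∃ a l, (a :: l).Perm u ∧ sprod a l = s}

/-- `A(L)`: the set of products, in order, of nonempty order-preserving sublists of `L`. -/
def ASet {S : Type*} [Mul S] (L : List S) : Set S :=
  {s | ∃ a l, (a :: l).Sublist L ∧ sprod a l = s}

/-- `HasIndexPeriod x r p` says that `r` is the index of `x` (the least `r > 0` such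
that `x^r = x^t` for some positive `t ≠ r`) and `p` is the period of `x` (the least
`p > 0` with `x^(r+p) = x^r`). Powers are expressed via `pow1 x (n-1) = x^n`. -/
def HasIndexPeriod {S : Type*} [Mul S] (x : S) (r p : ℕ) : Prop :=
  (0 < r ∧ (∃ t, 0 < t ∧ t ≠ r ∧ pow1 x (t - 1) = pow1 x (r - 1)) ∧
    ∀ r', 0 < r' → (∃ t, 0 < t ∧ t ≠ r' ∧ pow1 x (t - 1) = pow1 x (r' - 1)) → r ≤ r') ∧
  (0 < p ∧ pow1 x (r + p - 1) = pow1 x (r - 1) ∧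
    ∀ p', 0 < p' → pow1 x (r + p' - 1) = pow1 x (r - 1) → p ≤ p')


set_option linter.unusedSectionVars false
namespace StructAux
variable {S : Type*} [Semigroup S]

lemma foldl_mul_assoc (l : List S) (x y : S) :
    l.foldl (· * ·) (x * y) = x * l.foldl (· * ·) y := by
  induction l generalizing y with
  | nil => rfl
  | cons c l ih => simpa [mul_assoc] using ih (y * c)

lemma sprod_cons (a b : S) (l : List S) : sprod a (b :: l) = a * sprod b l := by
  simp only [sprod, List.foldl_cons]
  exact foldl_mul_assoc l a b

lemma sprod_concat (a c : S) (l : List S) : sprod a (l ++ [c]) = sprod a l * c := by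
  simp [sprod, List.foldl_append]

@[simp] lemma pow1_zero (x : S) : pow1 x 0 = x := rfl

lemma pow1_succ (x : S) (n : ℕ) : pow1 x (n + 1) = pow1 x n * x := rfl

lemma pow1_add (x : S) (i j : ℕ) : pow1 x i * pow1 x j = pow1 x (i + j + 1) := by
  induction j with
  | zero => rfl
  | succ j ih =>
    have : i + (j + 1) + 1 = (i + j + 1) + 1 := by omega
    rw [this, pow1_succ, pow1_succ, ← mul_assoc, ih]

lemma pow1_succ' (x : S) (n : ℕ) : x * pow1 x n = pow1 x (n + 1) := by
  have := pow1_add x 0 n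
  simpa using this

lemma sprod_replicate (c : S) (n : ℕ) : sprod c (List.replicate n c) = pow1 c n := by
  induction n with
  | zero => rfl
  | succ n ih => rw [List.replicate_succ', sprod_concat, ih, pow1_succ]

variable [DecidableEq S]

/-- products of nonempty words whose content is a sub-multiset of `M` -/
def piM (M : Multiset S) : Set S := {s | ∃ a l, ↑(a :: l) ≤ M ∧ sprod a l = s}

lemma piM_mono {M M' : Multiset S} (h : M ≤ M') : piM M ⊆ piM M' := by
  rintro x ⟨a, l, hle, hp⟩
  exact ⟨a, l, le_trans hle h, hp⟩

lemma mem_piM_single {M : Multiset S} {c : S} (h : c ∈ M) : c ∈ piM M :=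
  ⟨c, [], by simpa using h, rfl⟩

lemma mem_piM_replicate {M : Multiset S} {c : S} {n : ℕ} (h : n + 1 ≤ M.count c) :
    pow1 c n ∈ piM M := by
  refine ⟨c, List.replicate n c, ?_, sprod_replicate c n⟩
  have : (↑(c :: List.replicate n c) : Multiset S) = Multiset.replicate (n + 1) c := by
    rw [Multiset.replicate_succ, ← Multiset.coe_replicate, Multiset.cons_coe]
  rw [this]
  exact (Multiset.le_count_iff_replicate_le).mp h

lemma append_mem {M : Multiset S} {c : S} {x : S} (hc : c ∈ M)
    (h : x ∈ piM (M.erase c)) : x * c ∈ piM M := by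
  obtain ⟨a, l, hle, hp⟩ := h
  refine ⟨a, l ++ [c], ?_, by rw [sprod_concat, hp]⟩
  have h1 : (↑(a :: (l ++ [c])) : Multiset S) = ↑(a :: l) + {c} := by
    have : a :: (l ++ [c]) = (a :: l) ++ [c] := rfl
    rw [this, ← Multiset.coe_add]
    rfl
  rw [h1]
  calc (↑(a :: l) : Multiset S) + {c} ≤ M.erase c + {c} := add_le_add_left hle _
    _ = M := by rw [add_comm, Multiset.singleton_add, Multiset.cons_erase hc]

lemma prepend_mem {M : Multiset S} {c : S} {x : S} (hc : c ∈ M)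
    (h : x ∈ piM (M.erase c)) : c * x ∈ piM M := by
  obtain ⟨a, l, hle, hp⟩ := h
  refine ⟨c, a :: l, ?_, by rw [sprod_cons, hp]⟩
  calc (↑(c :: a :: l) : Multiset S) = c ::ₘ ↑(a :: l) := by simp
    _ ≤ c ::ₘ M.erase c := Multiset.cons_le_cons c hle
    _ = M := Multiset.cons_erase hc

end StructAux

namespace StructAux
open scoped Classical
variable {S : Type*} [Semigroup S] [DecidableEq S]

lemma idem_of_collision (x : S) {i j : ℕ} (hij : i < j) (h : pow1 x i = pow1 x j) :
    ∃ e, i ≤ e ∧ e < j ∧ pow1 x e * pow1 x e = pow1 x e := by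
  set q := j - i with hq
  have hq1 : 1 ≤ q := by omega
  have step : ∀ t, pow1 x (i + q + t) = pow1 x (i + t) := by
    intro t
    induction t with
    | zero => simpa using (by rw [show i + q = j by omega]; exact h.symm)
    | succ t ih =>
      have e1 : i + q + (t + 1) = (i + q + t) + 1 := by omega
      have e2 : i + (t + 1) = (i + t) + 1 := by omega
      rw [e1, e2, pow1_succ, pow1_succ, ih]
  have per : ∀ k t, pow1 x (i + t + k * q) = pow1 x (i + t) := by
    intro k
    induction k with
    | zero => intro t; simp
    | succ k ih =>
      intro t
      have e1 : i + t + (k + 1) * q = i + q + (t + k * q) := by ring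
      rw [e1, step (t + k * q)]
      have e2 : i + (t + k * q) = i + t + k * q := by ring
      rw [e2, ih t]
  set μ := i / q + 1 with hμ
  have hm1 : i + 1 ≤ q * μ := by
    have h1 : q * (i / q) + q ≥ i + 1 := by
      have := Nat.mod_lt i (show 0 < q by omega)
      have h2 := Nat.div_add_mod i q
      omega
    calc i + 1 ≤ q * (i / q) + q := h1
      _ = q * μ := by rw [hμ]; ring
  have hm2 : q * μ ≤ i + q := by
    have h2 := Nat.div_add_mod i q
    have : q * (i / q) ≤ i := by omega
    calc q * μ = q * (i / q) + q := by rw [hμ]; ring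
      _ ≤ i + q := by omega
  refine ⟨q * μ - 1, by omega, by omega, ?_⟩
  rw [pow1_add]
  have e3 : q * μ - 1 + (q * μ - 1) + 1 = i + (q * μ - 1 - i) + μ * q := by
    have : i ≤ q * μ - 1 := by omega
    have : μ * q = q * μ := by ring
    omega
  rw [e3, per μ _]
  congr 1
  omega

variable (hfin : {x : S | x * x ≠ x}.Finite)

include hfin in
lemma exists_idem_pow (x : S) : ∃ e, pow1 x e * pow1 x e = pow1 x e := by
  by_contra hno
  push_neg at hno
  haveI : Finite {y : S // y * y ≠ y} := hfin.to_subtype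
  obtain ⟨i, j, hne, hval⟩ :=
    Finite.exists_ne_map_eq_of_infinite
      (fun n : ℕ => (⟨pow1 x n, hno n⟩ : {y : S // y * y ≠ y}))
  have hval' : pow1 x i = pow1 x j := congrArg Subtype.val hval
  rcases lt_or_gt_of_ne hne with h | h
  · obtain ⟨e, _, _, he⟩ := idem_of_collision x h hval'
    exact hno e he
  · obtain ⟨e, _, _, he⟩ := idem_of_collision x h hval'.symm
    exact hno e he

/-- idempotent-product free -/
def Ipf (M : Multiset S) : Prop := ∀ x ∈ piM M, x * x ≠ x

lemma Ipf.mono {M M' : Multiset S} (h : M ≤ M') (hi : Ipf M') : Ipf M :=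
  fun x hx => hi x (piM_mono h hx)

include hfin in
lemma pi_finite {M : Multiset S} (h : Ipf M) : (piM M).Finite :=
  hfin.subset (fun x hx => h x hx)

include hfin in
lemma erase_ssubset {M : Multiset S} (hI : Ipf M) {c : S} (hc : c ∈ M) :
    piM (M.erase c) ⊂ piM M := by
  refine ⟨piM_mono (Multiset.erase_le c M), ?_⟩
  intro hEq
  have hall : ∀ n, pow1 c n ∈ piM M := by
    intro n
    induction n with
    | zero => exact mem_piM_single hc
    | succ n ih =>
      have : pow1 c n ∈ piM (M.erase c) := hEq ih
      have := append_mem hc this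
      rwa [← pow1_succ] at this
  obtain ⟨e, he⟩ := exists_idem_pow hfin c
  exact hI _ (hall e) he

include hfin in
lemma card_le_ncard : ∀ (M : Multiset S), Ipf M → M.card ≤ (piM M).ncard := by
  intro M
  induction M using Multiset.strongInductionOn with
  | ih M IH =>
    intro hI
    rcases Multiset.empty_or_exists_mem M with h0 | ⟨c, hc⟩
    · simp [h0]
    · have hlt : M.erase c < M := Multiset.erase_lt.mpr hc
      have h1 : (M.erase c).card ≤ (piM (M.erase c)).ncard :=
        IH _ hlt (hI.mono (Multiset.erase_le c M))
      have h2 : (piM (M.erase c)).ncard < (piM M).ncard :=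
        Set.ncard_lt_ncard (erase_ssubset hfin hI hc) (pi_finite hfin hI)
      have h3 : (M.erase c).card + 1 = M.card := by
        have h4 := Multiset.card_erase_of_mem hc
        have h5 := Multiset.card_pos_iff_exists_mem.mpr ⟨c, hc⟩
        simp only [Nat.pred_eq_sub_one] at h4
        omega
      omega

/-- tight: ipf and the product-set is as small as possible -/
def Tight (M : Multiset S) : Prop := Ipf M ∧ (piM M).ncard = M.card

include hfin in
lemma tight_erase_missing {M : Multiset S} (hT : Tight M) {c : S} (hc : c ∈ M) :
    Tight (M.erase c) ∧ ∃ x, piM M \ piM (M.erase c) = {x} := by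
  obtain ⟨hI, hcard⟩ := hT
  have hIe : Ipf (M.erase c) := hI.mono (Multiset.erase_le c M)
  have hss := erase_ssubset hfin hI hc
  have h1 : (M.erase c).card ≤ (piM (M.erase c)).ncard := card_le_ncard hfin _ hIe
  have h2 : (piM (M.erase c)).ncard < (piM M).ncard :=
    Set.ncard_lt_ncard hss (pi_finite hfin hI)
  have h3 : (M.erase c).card + 1 = M.card := by
    have h4 := Multiset.card_erase_of_mem hc
    have h5 := Multiset.card_pos_iff_exists_mem.mpr ⟨c, hc⟩
    simp only [Nat.pred_eq_sub_one] at h4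
    omega
  have hEcard : (piM (M.erase c)).ncard = (M.erase c).card := by omega
  refine ⟨⟨hIe, hEcard⟩, ?_⟩
  have hdiff : (piM M \ piM (M.erase c)).ncard = 1 := by
    rw [Set.ncard_diff hss.1 (pi_finite hfin hIe)]
    omega
  exact Set.ncard_eq_one.mp hdiff

end StructAux


namespace StructAux
open scoped Classical
variable {S : Type*} [Semigroup S] [DecidableEq S]
variable (hfin : {x : S | x * x ≠ x}.Finite)

include hfin in
lemma missing_pow {M : Multiset S} (hT : Tight M) {c : S} (hc : c ∈ M) {x : S}
    (hxd : piM M \ piM (M.erase c) = {x}) :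
    ∃ m, pow1 c m = x ∧ (∀ κ, κ < m → pow1 c κ ∈ piM (M.erase c)) ∧
      ∀ κ1 κ2, κ1 < κ2 → κ2 ≤ m → pow1 c κ1 ≠ pow1 c κ2 := by
  have hxmem : x ∈ piM M \ piM (M.erase c) := hxd ▸ rfl
  have hsplit : ∀ y, y ∈ piM M → y ≠ x → y ∈ piM (M.erase c) := by
    intro y hy hne
    by_contra hnot
    have : y ∈ piM M \ piM (M.erase c) := ⟨hy, hnot⟩
    rw [hxd] at this
    exact hne this
  have hhit : ∃ κ, pow1 c κ = x := by
    by_contra hno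
    push_neg at hno
    have hall : ∀ κ, pow1 c κ ∈ piM (M.erase c) := by
      intro κ
      induction κ with
      | zero => exact hsplit _ (mem_piM_single hc) (hno 0)
      | succ κ ih =>
        have h1 : pow1 c κ * c ∈ piM M := append_mem hc ih
        rw [← pow1_succ] at h1
        exact hsplit _ h1 (hno (κ + 1))
    obtain ⟨e, he⟩ := exists_idem_pow hfin c
    exact hT.1 _ (piM_mono (Multiset.erase_le c M) (hall e)) he
  set m := Nat.find hhit with hm
  have hspec : pow1 c m = x := Nat.find_spec hhit
  have hlow : ∀ κ, κ < m → pow1 c κ ∈ piM (M.erase c) := by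
    intro κ
    induction κ with
    | zero => exact fun h0 => hsplit _ (mem_piM_single hc) (Nat.find_min hhit h0)
    | succ κ ih =>
      intro hlt
      have h1 : pow1 c κ * c ∈ piM M := append_mem hc (ih (by omega))
      rw [← pow1_succ] at h1
      exact hsplit _ h1 (Nat.find_min hhit hlt)
  refine ⟨m, hspec, hlow, ?_⟩
  intro κ1 κ2 hlt hle heq
  obtain ⟨e, he1, he2, he3⟩ := idem_of_collision c hlt heq
  have hemem : pow1 c e ∈ piM M := by
    rcases eq_or_lt_of_le hle with h | h
    · rcases eq_or_lt_of_le (show e + 1 ≤ κ2 from he2) with h' | h'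
      · exact piM_mono (Multiset.erase_le c M) (hlow e (by omega))
      · exact piM_mono (Multiset.erase_le c M) (hlow e (by omega))
    · exact piM_mono (Multiset.erase_le c M) (hlow e (by omega))
  exact hT.1 _ hemem he3

/-- union of the per-letter chains with multiplicity bound -/
def chainsSet (M : Multiset S) : Set S :=
  {y | ∃ c, c ∈ M ∧ ∃ κ, κ + 1 ≤ M.count c ∧ pow1 c κ = y}

lemma chainsSet_subset_piM (M : Multiset S) : chainsSet M ⊆ piM M := by
  rintro y ⟨c, hc, κ, hκ, rfl⟩
  exact mem_piM_replicate hκ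

lemma chainsSet_erase_subset {M : Multiset S} (c : S) :
    chainsSet (M.erase c) ⊆ chainsSet M := by
  rintro y ⟨f, hf, κ, hκ, rfl⟩
  refine ⟨f, Multiset.mem_of_mem_erase hf, κ, ?_, rfl⟩
  exact le_trans hκ (Multiset.count_le_of_le f (Multiset.erase_le c M))

include hfin in
theorem main_ind : ∀ (n : ℕ) (M : Multiset S), M.card = n → Tight M →
    ((∀ c ∈ M, pow1 c (M.count c - 1) ∉ piM (M.erase c)) ∧ piM M = chainsSet M) := by
  intro n
  induction n using Nat.strong_induction_on with
  | _ n IH =>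
  intro M hcard hT
  -- the key two-copy case
  have halign2 : ∀ f, f ∈ M → 2 ≤ M.count f →
      pow1 f (M.count f - 1) ∉ piM (M.erase f) := by
    intro f hf h2 Hbad
    set v := M.count f with hv
    obtain ⟨hTe, x, hxd⟩ := tight_erase_missing hfin hT hf
    obtain ⟨m, hm, hlow, hdist⟩ := missing_pow hfin hT hf hxd
    have hxmem : x ∈ piM M \ piM (M.erase f) := hxd ▸ rfl
    have hxB : x ∉ piM (M.erase f) := hxmem.2
    have hcnte : (M.erase f).count f = v - 1 := by
      rw [Multiset.count_erase_self]
    have hne : m ≠ v - 1 := by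
      intro h
      rw [h] at hm
      exact hxB (hm ▸ Hbad)
    have hnotlt : ¬ m < v - 1 := by
      intro h
      have : pow1 f m ∈ piM (M.erase f) :=
        mem_piM_replicate (by rw [hcnte]; omega)
      exact hxB (hm ▸ this)
    have hmv : v ≤ m := by omega
    have hfe : f ∈ M.erase f := by
      rw [← Multiset.count_pos, hcnte]; omega
    obtain ⟨hTee, x', hx'd⟩ := tight_erase_missing hfin hTe hfe
    have c1 : pow1 f (m - 1) ∈ piM (M.erase f) := hlow (m - 1) (by omega)
    have c2 : pow1 f (m - 1) ∉ piM ((M.erase f).erase f) := by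
      intro hmem
      have h1 : pow1 f (m - 1) * f ∈ piM (M.erase f) := append_mem hfe hmem
      rw [← pow1_succ] at h1
      have h2 : m - 1 + 1 = m := by omega
      rw [h2] at h1
      exact hxB (hm ▸ h1)
    have hcarde : (M.erase f).card < n := by
      have h4 := Multiset.card_erase_of_mem hf
      have h5 := Multiset.card_pos_iff_exists_mem.mpr ⟨f, hf⟩
      simp only [Nat.pred_eq_sub_one] at h4
      omega
    have IHe := IH _ hcarde (M.erase f) rfl hTe
    have c3 : pow1 f (v - 2) ∉ piM ((M.erase f).erase f) := by
      have := IHe.1 f hfe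
      rw [hcnte] at this
      have h6 : v - 1 - 1 = v - 2 := by omega
      rw [h6] at this
      exact this
    have c4 : pow1 f (v - 2) ∈ piM (M.erase f) :=
      mem_piM_replicate (by rw [hcnte]; omega)
    have e1 : pow1 f (m - 1) = x' := by
      have : pow1 f (m - 1) ∈ piM (M.erase f) \ piM ((M.erase f).erase f) := ⟨c1, c2⟩
      rw [hx'd] at this
      exact this
    have e2 : pow1 f (v - 2) = x' := by
      have : pow1 f (v - 2) ∈ piM (M.erase f) \ piM ((M.erase f).erase f) := ⟨c4, c3⟩
      rw [hx'd] at this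
      exact this
    exact hdist (v - 2) (m - 1) (by omega) (by omega) (e2.trans e1.symm)
  -- full alignment
  have halign : ∀ c ∈ M, pow1 c (M.count c - 1) ∉ piM (M.erase c) := by
    intro c hc
    have hv1 : 1 ≤ M.count c := Multiset.count_pos.mpr hc
    rcases le_or_gt 2 (M.count c) with h2 | h2
    · exact halign2 c hc h2
    · -- count = 1
      have hv : M.count c = 1 := by omega
      intro Hbad
      rw [hv] at Hbad
      simp only [Nat.sub_self, pow1_zero] at Hbad
      -- c ∈ piM (M.erase c)
      obtain ⟨hTe, _⟩ := tight_erase_missing hfin hT hc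
      have hcarde : (M.erase c).card < n := by
        have h4 := Multiset.card_erase_of_mem hc
        have h5 := Multiset.card_pos_iff_exists_mem.mpr ⟨c, hc⟩
        simp only [Nat.pred_eq_sub_one] at h4
        omega
      have IHe := IH _ hcarde (M.erase c) rfl hTe
      rw [IHe.2] at Hbad
      obtain ⟨f, hfe, κ, hκ, hfc⟩ := Hbad
      have hfc' : f ≠ c := by
        intro h
        subst h
        have := Multiset.count_pos.mpr hfe
        rw [Multiset.count_erase_self, hv] at this
        omega
      have hκ1 : 1 ≤ κ := by
        by_contra h
        push_neg at h
        interval_cases κ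
        · simp only [pow1_zero] at hfc
          exact hfc' hfc
      have hcntf : (M.erase c).count f = M.count f := Multiset.count_erase_of_ne hfc' M
      set vf := M.count f with hvf
      have hvf2 : 2 ≤ vf := by
        have := hκ.trans (le_of_eq hcntf)
        omega
      have hfM : f ∈ M := Multiset.mem_of_mem_erase hfe
      refine halign2 f hfM hvf2 ?_
      -- show pow1 f (vf - 1) ∈ piM (M.erase f)
      have hcM : c ∈ M.erase f := by
        rw [Multiset.mem_erase_of_ne (fun h => hfc' h.symm)]
        exact hc
      rcases eq_or_lt_of_le (show κ + 1 ≤ vf from hcntf ▸ hκ) with hE | hE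
      · -- vf = κ + 1 : then pow1 f (vf - 1) = pow1 f κ = c
        have : pow1 f (vf - 1) = c := by
          rw [← hE]
          simpa using hfc
        rw [this]
        exact mem_piM_single hcM
      · -- κ + 1 < vf
        refine ⟨f, List.replicate (vf - κ - 2) f ++ [c], ?_, ?_⟩
        · have hcoe : (↑(f :: (List.replicate (vf - κ - 2) f ++ [c])) : Multiset S)
              = Multiset.replicate (vf - κ - 1) f + {c} := by
            have h7 : f :: (List.replicate (vf - κ - 2) f ++ [c])
                = List.replicate (vf - κ - 1) f ++ [c] := by
              rw [show vf - κ - 1 = (vf - κ - 2) + 1 by omega, List.replicate_succ]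
              rfl
            rw [h7, ← Multiset.coe_add, Multiset.coe_replicate]
            rfl
          rw [hcoe, Multiset.le_iff_count]
          intro d
          rw [Multiset.count_add, Multiset.count_replicate, Multiset.count_singleton]
          by_cases hdf : d = f
          · rw [if_pos hdf.symm, if_neg (show ¬ d = c from fun h => hfc' (hdf.symm.trans h)),
              hdf, Multiset.count_erase_self]
            omega
          · rw [if_neg (show ¬ f = d from fun h => hdf h.symm)]
            by_cases hdc : d = c
            · rw [if_pos hdc, Multiset.count_erase_of_ne hdf, hdc]
              omega
            · rw [if_neg hdc]
              omega
        · rw [sprod_concat, sprod_replicate, ← hfc, pow1_add]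
          congr 1
          omega
  -- peeling
  have hpeel : piM M = chainsSet M := by
    refine Set.Subset.antisymm ?_ (chainsSet_subset_piM M)
    by_cases hM : M = 0
    · subst hM
      rintro x ⟨a, l, hle, -⟩
      exfalso
      have h0 : (↑(a :: l) : Multiset S) = 0 := Multiset.le_zero.mp hle
      rw [← Multiset.cons_coe] at h0
      exact Multiset.cons_ne_zero h0
    · obtain ⟨c, hc⟩ := Multiset.exists_mem_of_ne_zero hM
      have hv1 : 1 ≤ M.count c := Multiset.count_pos.mpr hc
      have hxcA : pow1 c (M.count c - 1) ∈ piM M := mem_piM_replicate (by omega)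
      have hxcB := halign c hc
      obtain ⟨hTe, x, hxd⟩ := tight_erase_missing hfin hT hc
      have hxeq : pow1 c (M.count c - 1) = x := by
        have : pow1 c (M.count c - 1) ∈ piM M \ piM (M.erase c) := ⟨hxcA, hxcB⟩
        rw [hxd] at this
        exact this
      have hcarde : (M.erase c).card < n := by
        have h4 := Multiset.card_erase_of_mem hc
        have h5 := Multiset.card_pos_iff_exists_mem.mpr ⟨c, hc⟩
        simp only [Nat.pred_eq_sub_one] at h4
        omega
      have IHe := IH _ hcarde (M.erase c) rfl hTe
      intro y hy
      by_cases hyx : y = x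
      · exact ⟨c, hc, M.count c - 1, by omega, by rw [hxeq, hyx]⟩
      · have hyB : y ∈ piM (M.erase c) := by
          by_contra hnot
          have : y ∈ piM M \ piM (M.erase c) := ⟨hy, hnot⟩
          rw [hxd] at this
          exact hyx this
        rw [IHe.2] at hyB
        exact chainsSet_erase_subset c hyB
  exact ⟨halign, hpeel⟩

end StructAux


namespace StructAux
variable {S : Type*} [Semigroup S] [DecidableEq S]

lemma piSet_eq_piM (T : List S) : PiSet T = piM (↑T : Multiset S) := by
  ext s
  constructor
  · rintro ⟨u, hsub, a, l, hperm, hprod⟩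
    refine ⟨a, l, ?_, hprod⟩
    have h1 : (↑(a :: l) : Multiset S) = ↑u := Multiset.coe_eq_coe.mpr hperm
    rw [h1]
    exact Multiset.coe_le.mpr hsub.subperm
  · rintro ⟨a, l, hle, hprod⟩
    obtain ⟨u, hperm, hsub⟩ := Multiset.coe_le.mp hle
    exact ⟨u, hsub, a, l, hperm.symm, hprod⟩

variable (hfin : {x : S | x * x ≠ x}.Finite)

include hfin in
lemma chain_step {M : Multiset S} (hT : Tight M) {a : S} (ha : a ∈ M)
    (hxa : pow1 a (M.count a - 1) ∉ piM (M.erase a)) {b : S} (hb : b ∈ M) :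
    ∀ i, (pow1 a i * b ∈ piM M) ∨ ∃ k, pow1 a i * b = pow1 a k := by
  obtain ⟨hTe, x, hxd⟩ := tight_erase_missing hfin hT ha
  have hv1 : 1 ≤ M.count a := Multiset.count_pos.mpr ha
  have hxeq : pow1 a (M.count a - 1) = x := by
    have hA : pow1 a (M.count a - 1) ∈ piM M := mem_piM_replicate (by omega)
    have : pow1 a (M.count a - 1) ∈ piM M \ piM (M.erase a) := ⟨hA, hxa⟩
    rw [hxd] at this
    exact this
  have hsplit : ∀ y, y ∈ piM M → y ≠ pow1 a (M.count a - 1) → y ∈ piM (M.erase a) := by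
    intro y hy hne
    by_contra hnot
    have : y ∈ piM M \ piM (M.erase a) := ⟨hy, hnot⟩
    rw [hxd] at this
    exact hne (this.trans hxeq.symm)
  intro i
  induction i with
  | zero =>
    by_cases hbx : b = pow1 a (M.count a - 1)
    · refine Or.inr ⟨0 + (M.count a - 1) + 1, ?_⟩
      rw [← pow1_add, hbx]
    · exact Or.inl (prepend_mem ha (hsplit b (mem_piM_single hb) hbx))
  | succ i ih =>
    have hrw : pow1 a (i + 1) * b = a * (pow1 a i * b) := by
      rw [← pow1_succ', mul_assoc]
    rcases ih with hmem | ⟨k, hk⟩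
    · by_cases hzx : pow1 a i * b = pow1 a (M.count a - 1)
      · refine Or.inr ⟨M.count a - 1 + 1, ?_⟩
        rw [hrw, hzx, pow1_succ']
      · exact Or.inl (by rw [hrw]; exact prepend_mem ha (hsplit _ hmem hzx))
    · refine Or.inr ⟨k + 1, ?_⟩
      rw [hrw, hk, pow1_succ']

include hfin in
lemma mul_pow_mem {M : Multiset S} (hT : Tight M)
    (halign : ∀ c ∈ M, pow1 c (M.count c - 1) ∉ piM (M.erase c))
    (hpeel : piM M = chainsSet M)
    {a b : S} (ha : a ∈ M) (hb : b ∈ M) :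
    ∀ j i, ∃ c, c ∈ M ∧ ∃ k, pow1 a i * pow1 b j = pow1 c k := by
  intro j
  induction j with
  | zero =>
    intro i
    rcases chain_step hfin hT ha (halign a ha) hb i with hmem | ⟨k, hk⟩
    · rw [hpeel] at hmem
      obtain ⟨c, hc, κ, _, hκ⟩ := hmem
      exact ⟨c, hc, κ, by rw [pow1_zero, hκ]⟩
    · exact ⟨a, ha, k, by rw [pow1_zero, hk]⟩
  | succ j ih =>
    intro i
    obtain ⟨c, hc, k, hk⟩ := ih i
    have hrw : pow1 a i * pow1 b (j + 1) = (pow1 a i * pow1 b j) * b := by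
      rw [pow1_succ, ← mul_assoc]
    rcases chain_step hfin hT hc (halign c hc) hb k with hmem | ⟨k', hk'⟩
    · rw [hpeel] at hmem
      obtain ⟨c', hc', κ, _, hκ⟩ := hmem
      exact ⟨c', hc', κ, by rw [hrw, hk, hκ]⟩
    · exact ⟨c, hc, k', by rw [hrw, hk, hk']⟩

end StructAux


open StructAux in
/-- Claim B: for an idempotent-product free sequence `T` of maximal length
`|S \ E(S)|`, the subsemigroup generated by `supp(T)` is `⋃_{a ∈ supp(T)} ⟨a⟩`;
in particular every `x ∈ Π(T)` equals `a^k` for some `a ∈ supp(T)` and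
`1 ≤ k ≤ v_a(T)` (here `pow1 a (k-1) = a^k`, so `pow1 a k = a^(k+1)`). -/
theorem stmt_8 {S : Type*} [Semigroup S] [Nonempty S] [DecidableEq S]
    (hfin : {x : S | x * x ≠ x}.Finite)
    (T : List S) (hlen : T.length = {x : S | x * x ≠ x}.ncard)
    (hfree : PiSet T ∩ {e : S | e * e = e} = ∅) :
    ((Subsemigroup.closure {x : S | x ∈ T} : Set S)
        = ⋃ a ∈ {x : S | x ∈ T}, Set.range (pow1 a)) ∧
      (∀ x ∈ PiSet T, ∃ a ∈ T, ∃ k : ℕ, k + 1 ≤ T.count a ∧ pow1 a k = x) := by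
  classical
  have hipf : Ipf (↑T : Multiset S) := by
    intro x hx hxx
    have hx' : x ∈ PiSet T := by rw [piSet_eq_piM]; exact hx
    have hmem : x ∈ PiSet T ∩ {e : S | e * e = e} := ⟨hx', hxx⟩
    rw [hfree] at hmem
    exact hmem
  have hsub : piM (↑T : Multiset S) ⊆ {x : S | x * x ≠ x} := fun x hx => hipf x hx
  have hclen : (↑T : Multiset S).card = {x : S | x * x ≠ x}.ncard := by
    rw [Multiset.coe_card, hlen]
  have hge := card_le_ncard hfin (↑T : Multiset S) hipf
  have hle2 : (piM (↑T : Multiset S)).ncard ≤ {x : S | x * x ≠ x}.ncard :=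
    Set.ncard_le_ncard hsub hfin
  have hT : Tight (↑T : Multiset S) := ⟨hipf, by omega⟩
  obtain ⟨halign, hpeel⟩ := main_ind hfin ((↑T : Multiset S)).card (↑T : Multiset S) rfl hT
  constructor
  · -- part 1
    have hKmul : ∀ x y : S, (∃ a, a ∈ T ∧ ∃ k, pow1 a k = x) →
        (∃ b, b ∈ T ∧ ∃ k, pow1 b k = y) → (∃ c, c ∈ T ∧ ∃ k, pow1 c k = x * y) := by
      rintro x y ⟨a, haT, i, rfl⟩ ⟨b, hbT, j, rfl⟩
      obtain ⟨c, hcM, k, hk⟩ := mul_pow_mem hfin hT halign hpeel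
        (Multiset.mem_coe.mpr haT) (Multiset.mem_coe.mpr hbT) j i
      exact ⟨c, Multiset.mem_coe.mp hcM, k, hk.symm⟩
    let K : Subsemigroup S :=
      { carrier := {y | ∃ a, a ∈ T ∧ ∃ k, pow1 a k = y}
        mul_mem' := fun hx hy => hKmul _ _ hx hy }
    have hTK : {x : S | x ∈ T} ⊆ (K : Set S) := by
      intro a haT
      exact ⟨a, haT, 0, rfl⟩
    have hKle : Subsemigroup.closure {x : S | x ∈ T} ≤ K :=
      Subsemigroup.closure_le.mpr hTK
    have hpowcl : ∀ (a : S), a ∈ T → ∀ k,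
        pow1 a k ∈ Subsemigroup.closure {x : S | x ∈ T} := by
      intro a haT k
      induction k with
      | zero => exact Subsemigroup.subset_closure haT
      | succ k ih =>
        rw [pow1_succ]
        exact mul_mem ih (Subsemigroup.subset_closure haT)
    ext y
    constructor
    · intro hy
      obtain ⟨a, haT, k, hk⟩ := hKle hy
      exact Set.mem_biUnion (show a ∈ {x : S | x ∈ T} from haT) ⟨k, hk⟩
    · intro hy
      obtain ⟨a, haT, hr⟩ := Set.mem_iUnion₂.mp hy
      obtain ⟨k, hk⟩ := hr
      rw [← hk]
      exact hpowcl a haT k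
  · -- part 2
    intro x hx
    rw [piSet_eq_piM, hpeel] at hx
    obtain ⟨c, hc, κ, hκ, hpow⟩ := hx
    exact ⟨c, Multiset.mem_coe.mp hc, κ, by rwa [Multiset.coe_count] at hκ, hpow⟩
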